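/- Let α ∈ (0,1), let U and V be independent random variables uniformly distributed on (0,1), and let B be a Bernoulli random variable independent of (U, V) with P(B = 1) = 1 − α. Define T = U^{α} if B = 0 and T = U^{α} · V if B = 1. Then T is uniformly distributed on (0,1). Equivalently, if E₁ and E₂ are independent exponential random variables with rate 1 and B is an independent Bernoulli(1−α) random variable, then α E₁ + B E₂ is exponentially distributed with rate 1. -/

import Mathlib

open MeasureTheory ProbabilityTheory

/-- The uniform distribution on the interval `(0,1)`. -/
noncomputable def unifOI : Measure ℝ := volume.restrict (Set.Ioo (0:ℝ) 1)

lemma unifOI_Iic (t : ℝ) : unifOI (Set.Iic t) = ENNReal.ofReal (min t 1) := by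
  rw [unifOI, Measure.restrict_apply measurableSet_Iic]
  rcases le_or_gt 1 t with h | h
  · have he : Set.Iic t ∩ Set.Ioo 0 1 = Set.Ioo (0:ℝ) 1 :=
      Set.inter_eq_self_of_subset_right (fun x hx => hx.2.le.trans h)
    rw [he, Real.volume_Ioo, min_eq_right h]; norm_num
  · have he : Set.Iic t ∩ Set.Ioo 0 1 = Set.Ioc (0:ℝ) t := by
      ext x
      simp only [Set.mem_inter_iff, Set.mem_Iic, Set.mem_Ioo, Set.mem_Ioc]
      exact ⟨fun ⟨h1, h2, _⟩ => ⟨h2, h1⟩, fun ⟨h1, h2⟩ => ⟨h2, h1, h2.trans_lt h⟩⟩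
    rw [he, Real.volume_Ioc, min_eq_left h.le]; norm_num

instance : IsProbabilityMeasure unifOI := by
  constructor
  rw [unifOI, Measure.restrict_apply_univ, Real.volume_Ioo]
  norm_num

lemma unif_calc1 (α t s : ℝ) (hα0 : 0 < α) (hs0 : 0 < s) (hs1 : s < 1)
    (hsα : s ^ α = t) :
    unifOI {x : ℝ | x ^ α ≤ t} = ENNReal.ofReal s := by
  have hms : MeasurableSet {x : ℝ | x ^ α ≤ t} :=
    measurableSet_le (measurable_id.pow_const α) measurable_const
  rw [unifOI, Measure.restrict_apply hms]
  have he : {x : ℝ | x ^ α ≤ t} ∩ Set.Ioo 0 1 = Set.Ioc (0:ℝ) s := by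
    ext x
    simp only [Set.mem_inter_iff, Set.mem_setOf_eq, Set.mem_Ioo, Set.mem_Ioc]
    constructor
    · rintro ⟨h1, h2, h3⟩
      refine ⟨h2, ?_⟩
      rw [← hsα] at h1
      exact (Real.rpow_le_rpow_iff h2.le hs0.le hα0).1 h1
    · rintro ⟨h1, h2⟩
      exact ⟨by rw [← hsα]; exact Real.rpow_le_rpow h1.le h2 hα0.le, h1, h2.trans_lt hs1⟩
  rw [he, Real.volume_Ioc, sub_zero]

lemma key_integral (α t s : ℝ) (hα0 : 0 < α) (hα1 : α < 1) (ht : 0 < t)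
    (hs0 : 0 < s) (hs1 : s < 1) (hsα : s ^ α = t) :
    ∫ x in Set.Ioo (0:ℝ) 1, min (t / x ^ α) 1 = s + (t - s)/(1-α) := by
  have hmeas : Measurable (fun x : ℝ => min (t / x ^ α) 1) :=
    (measurable_const.div (measurable_id.pow_const α)).min measurable_const
  have hbd : ∀ x : ℝ, 0 < x → ‖min (t / x ^ α) 1‖ ≤ 1 := by
    intro x hx
    have hxα : 0 < x ^ α := Real.rpow_pos_of_pos hx α
    rw [Real.norm_eq_abs, abs_le]
    constructor
    · have : (0:ℝ) ≤ min (t / x ^ α) 1 :=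
        le_min (div_nonneg ht.le hxα.le) zero_le_one
      linarith
    · exact min_le_right _ _
  have hint : ∀ A : Set ℝ, MeasurableSet A → A ⊆ Set.Ioo 0 1 →
      IntegrableOn (fun x : ℝ => min (t / x ^ α) 1) A volume := by
    intro A hA hsub
    haveI : IsFiniteMeasure (volume.restrict A) := by
      constructor
      rw [Measure.restrict_apply_univ]
      exact lt_of_le_of_lt (measure_mono hsub) (by rw [Real.volume_Ioo]; norm_num)
    apply Integrable.mono' (integrable_const (1:ℝ)) hmeas.aestronglyMeasurable
    filter_upwards [ae_restrict_mem hA] with x hx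
    exact hbd x (hsub hx).1
  have hsplit : Set.Ioc (0:ℝ) s ∪ Set.Ioo s 1 = Set.Ioo (0:ℝ) 1 :=
    Set.Ioc_union_Ioo_eq_Ioo hs0.le hs1
  have hdisj : Disjoint (Set.Ioc (0:ℝ) s) (Set.Ioo s 1) := by
    apply Set.disjoint_left.2
    rintro x ⟨_, hxs⟩ ⟨hsx, _⟩; exact absurd hxs (not_le.2 hsx)
  rw [← hsplit, setIntegral_union hdisj measurableSet_Ioo
    (hint _ measurableSet_Ioc (fun x hx => ⟨hx.1, lt_of_le_of_lt hx.2 hs1⟩)) (hint _ measurableSet_Ioo (fun x hx => ⟨hs0.trans hx.1, hx.2⟩))]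
  have h1 : ∫ x in Set.Ioc (0:ℝ) s, min (t / x ^ α) 1 = s := by
    rw [setIntegral_congr_fun measurableSet_Ioc (g := fun _ => (1:ℝ))]
    · simp [Real.volume_Ioc, hs0.le]
    · intro x hx
      have hxα : 0 < x ^ α := Real.rpow_pos_of_pos hx.1 α
      apply min_eq_right
      rw [le_div_iff₀ hxα, one_mul, ← hsα]
      exact Real.rpow_le_rpow hx.1.le hx.2 hα0.le
  have h2 : ∫ x in Set.Ioo s (1:ℝ), min (t / x ^ α) 1
      = t * ((1 - s ^ (1-α)) / (1-α)) := by
    rw [setIntegral_congr_fun measurableSet_Ioo (g := fun x => t * x ^ (-α))]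
    · rw [← integral_Ioc_eq_integral_Ioo, ← intervalIntegral.integral_of_le hs1.le,
        intervalIntegral.integral_const_mul, integral_rpow (Or.inl (by linarith))]
      rw [Real.one_rpow, show -α + 1 = 1 - α from by ring]
    · intro x hx
      dsimp only
      have hx0 : 0 < x := hs0.trans hx.1
      have hxα : 0 < x ^ α := Real.rpow_pos_of_pos hx0 α
      have : min (t / x ^ α) 1 = t / x ^ α := by
        apply min_eq_left
        rw [div_le_one hxα, ← hsα]
        exact Real.rpow_le_rpow hs0.le hx.1.le hα0.le
      rw [this, Real.rpow_neg hx0.le, div_eq_mul_inv]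
  rw [h1, h2]
  have hts : t * s ^ (1-α) = s := by
    rw [← hsα, ← Real.rpow_add hs0]
    norm_num
  have h1α : (1:ℝ) - α ≠ 0 := by linarith
  field_simp
  nlinarith [hts]

lemma key_integrable (α t : ℝ) (ht : 0 < t) :
    IntegrableOn (fun x : ℝ => min (t / x ^ α) 1) (Set.Ioo 0 1) volume := by
  have hmeas : Measurable (fun x : ℝ => min (t / x ^ α) 1) :=
    (measurable_const.div (measurable_id.pow_const α)).min measurable_const
  haveI : IsFiniteMeasure (volume.restrict (Set.Ioo (0:ℝ) 1)) := by
    constructor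
    rw [Measure.restrict_apply_univ, Real.volume_Ioo]
    norm_num
  apply Integrable.mono' (integrable_const (1:ℝ)) hmeas.aestronglyMeasurable
  filter_upwards [ae_restrict_mem measurableSet_Ioo] with x hx
  have hxα : 0 < x ^ α := Real.rpow_pos_of_pos hx.1 α
  rw [Real.norm_eq_abs, abs_le]
  constructor
  · have : (0:ℝ) ≤ min (t / x ^ α) 1 := le_min (div_nonneg ht.le hxα.le) zero_le_one
    linarith
  · exact min_le_right _ _

lemma prod_calc (α t s : ℝ) (hα0 : 0 < α) (hα1 : α < 1) (ht : 0 < t)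
    (hs0 : 0 < s) (hs1 : s < 1) (hsα : s ^ α = t) :
    (unifOI.prod unifOI) {p : ℝ × ℝ | p.1 ^ α * p.2 ≤ t}
      = ENNReal.ofReal (s + (t - s)/(1-α)) := by
  have hSm : MeasurableSet {p : ℝ × ℝ | p.1 ^ α * p.2 ≤ t} :=
    measurableSet_le ((measurable_fst.pow_const α).mul measurable_snd) measurable_const
  rw [Measure.prod_apply hSm]
  have hfiber : ∀ x : ℝ, x ∈ Set.Ioo (0:ℝ) 1 →
      unifOI (Prod.mk x ⁻¹' {p : ℝ × ℝ | p.1 ^ α * p.2 ≤ t})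
        = ENNReal.ofReal (min (t / x ^ α) 1) := by
    intro x hx
    have hxα : 0 < x ^ α := Real.rpow_pos_of_pos hx.1 α
    have he : Prod.mk x ⁻¹' {p : ℝ × ℝ | p.1 ^ α * p.2 ≤ t} = Set.Iic (t / x ^ α) := by
      ext y
      simp only [Set.mem_preimage, Set.mem_setOf_eq, Set.mem_Iic]
      exact (le_div_iff₀' hxα).symm
    rw [he, unifOI_Iic]
  have houter : (fun x => unifOI (Prod.mk x ⁻¹'
        {p : ℝ × ℝ | p.1 ^ α * p.2 ≤ t})) =ᵐ[unifOI]
      (fun x => ENNReal.ofReal (min (t / x ^ α) 1)) := by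
    rw [unifOI]
    filter_upwards [ae_restrict_mem measurableSet_Ioo] with x hx
    exact hfiber x hx
  rw [lintegral_congr_ae houter]
  have hnn : 0 ≤ᵐ[volume.restrict (Set.Ioo (0:ℝ) 1)] fun x => min (t / x ^ α) 1 := by
    filter_upwards [ae_restrict_mem measurableSet_Ioo] with x hx
    exact le_min (div_nonneg ht.le (Real.rpow_pos_of_pos hx.1 α).le) zero_le_one
  rw [show (unifOI : Measure ℝ) = volume.restrict (Set.Ioo 0 1) from rfl,
    ← ofReal_integral_eq_lintegral_ofReal (key_integrable α t ht) hnn,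
    key_integral α t s hα0 hα1 ht hs0 hs1 hsα]

/-- Let `α ∈ (0,1)`, let `U, V` be independent uniforms on `(0,1)`,
and let `B` be a Bernoulli random variable with `P(B = 1) = 1 − α`, independent of
`(U,V)`. Define `T = U^α` if `B = 0` and `T = U^α · V` if `B = 1`. Then `T` is
uniformly distributed on `(0,1)`. -/
theorem stmt_12 (α : ℝ) (hα : α ∈ Set.Ioo (0:ℝ) 1)
    {Ω : Type} [MeasurableSpace Ω] (Pr : Measure Ω) [IsProbabilityMeasure Pr]
    (U V : Ω → ℝ) (B : Ω → Bool)
    (hU : Measurable U) (hV : Measurable V) (hB : Measurable B)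
    (hUV : IndepFun U V Pr)
    (hBUV : IndepFun B (fun ω => (U ω, V ω)) Pr)
    (hlU : Measure.map U Pr = unifOI) (hlV : Measure.map V Pr = unifOI)
    (hlB : Pr {ω | B ω = true} = ENNReal.ofReal (1 - α)) :
    Measure.map (fun ω => if B ω then U ω ^ α * V ω else U ω ^ α) Pr = unifOI := by
  obtain ⟨hα0, hα1⟩ := hα
  have hmT : Measurable (fun ω => if B ω then U ω ^ α * V ω else U ω ^ α) := by
    apply Measurable.ite (hB (measurableSet_singleton true))
      ((hU.pow_const α).mul hV) (hU.pow_const α)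
  haveI : IsProbabilityMeasure
      (Measure.map (fun ω => if B ω then U ω ^ α * V ω else U ω ^ α) Pr) :=
    Measure.isProbabilityMeasure_map hmT.aemeasurable
  -- the good event
  have hGU : Pr (U ⁻¹' Set.Ioo 0 1) = 1 := by
    rw [← Measure.map_apply hU measurableSet_Ioo, hlU, unifOI,
      Measure.restrict_apply measurableSet_Ioo, Set.inter_self, Real.volume_Ioo]
    norm_num
  have hGV : Pr (V ⁻¹' Set.Ioo 0 1) = 1 := by
    rw [← Measure.map_apply hV measurableSet_Ioo, hlV, unifOI,
      Measure.restrict_apply measurableSet_Ioo, Set.inter_self, Real.volume_Ioo]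
    norm_num
  have hG : Pr (U ⁻¹' Set.Ioo 0 1 ∩ V ⁻¹' Set.Ioo 0 1) = 1 := by
    rw [← prob_compl_eq_zero_iff ((hU measurableSet_Ioo).inter (hV measurableSet_Ioo)),
      Set.compl_inter]
    refine le_antisymm (le_trans (measure_union_le _ _) ?_) (zero_le)
    rw [prob_compl_eq_one_sub (hU measurableSet_Ioo),
      prob_compl_eq_one_sub (hV measurableSet_Ioo), hGU, hGV]
    simp
  apply Measure.ext_of_Iic
  intro t
  rw [Measure.map_apply hmT measurableSet_Iic, unifOI_Iic]
  rcases le_or_gt t 0 with ht0 | ht0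
  · rw [min_eq_left (ht0.trans zero_le_one), ENNReal.ofReal_eq_zero.2 ht0]
    have hGc : Pr ((U ⁻¹' Set.Ioo 0 1 ∩ V ⁻¹' Set.Ioo 0 1)ᶜ) = 0 := by
      rw [← prob_compl_eq_zero_iff
        ((hU measurableSet_Ioo).inter (hV measurableSet_Ioo))] at hG
      exact hG
    refine measure_mono_null ?_ hGc
    · intro ω hω
      simp only [Set.mem_compl_iff, Set.mem_inter_iff, Set.mem_preimage, Set.mem_Ioo]
      intro ⟨⟨hu0, hu1⟩, ⟨hv0, hv1⟩⟩
      have h1 : 0 < U ω ^ α := Real.rpow_pos_of_pos hu0 α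
      have h2 : (0:ℝ) < if B ω then U ω ^ α * V ω else U ω ^ α := by
        split <;> [exact mul_pos h1 hv0; exact h1]
      have := Set.mem_preimage.1 hω
      simp only [Set.mem_Iic] at this
      linarith
  rcases le_or_gt 1 t with ht1 | ht1
  · rw [min_eq_right ht1, ENNReal.ofReal_one]
    refine le_antisymm prob_le_one ?_
    rw [← hG]
    apply measure_mono
    rintro ω ⟨hu, hv⟩
    simp only [Set.mem_preimage, Set.mem_Ioo] at hu hv
    simp only [Set.mem_preimage, Set.mem_Iic]
    have h1 : U ω ^ α < 1 := Real.rpow_lt_one hu.1.le hu.2 hα0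
    have h1' : 0 < U ω ^ α := Real.rpow_pos_of_pos hu.1 α
    have : (if B ω then U ω ^ α * V ω else U ω ^ α) < 1 := by
      split
      · nlinarith [hv.1, hv.2]
      · exact h1
    linarith
  -- main case 0 < t < 1
  set s : ℝ := t ^ α⁻¹ with hs
  have hs0 : 0 < s := Real.rpow_pos_of_pos ht0 _
  have hs1 : s < 1 := Real.rpow_lt_one ht0.le ht1 (by positivity)
  have hsα : s ^ α = t := Real.rpow_inv_rpow ht0.le (ne_of_gt hα0)
  have hst : s ≤ t := by
    nth_rewrite 1 [← Real.rpow_one s, ← hsα]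
    exact Real.rpow_le_rpow_of_exponent_ge hs0 hs1.le hα1.le
  have hSm2 : MeasurableSet {p : ℝ × ℝ | p.1 ^ α * p.2 ≤ t} :=
    measurableSet_le ((measurable_fst.pow_const α).mul measurable_snd) measurable_const
  have hSm1 : MeasurableSet {p : ℝ × ℝ | p.1 ^ α ≤ t} :=
    measurableSet_le (measurable_fst.pow_const α) measurable_const
  have hsetEq : (fun ω => if B ω then U ω ^ α * V ω else U ω ^ α) ⁻¹' Set.Iic t =
      (B ⁻¹' {true} ∩ (fun ω => (U ω, V ω)) ⁻¹' {p : ℝ × ℝ | p.1 ^ α * p.2 ≤ t}) ∪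
      (B ⁻¹' {false} ∩ (fun ω => (U ω, V ω)) ⁻¹' {p : ℝ × ℝ | p.1 ^ α ≤ t}) := by
    ext ω
    cases hb : B ω <;>
      simp [Set.mem_preimage, Set.mem_Iic, hb]
  rw [hsetEq, measure_union ?disj ?meas]
  case disj =>
    apply Set.disjoint_left.2
    rintro ω ⟨hb, -⟩ ⟨hb', -⟩
    simp only [Set.mem_preimage, Set.mem_singleton_iff] at hb hb'
    rw [hb] at hb'; exact Bool.noConfusion hb'
  case meas =>
    exact (hB (measurableSet_singleton false)).inter ((hU.prodMk hV) hSm1)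
  have hmap : Measure.map (fun ω => (U ω, V ω)) Pr = unifOI.prod unifOI := by
    rw [(indepFun_iff_map_prod_eq_prod_map_map hU.aemeasurable hV.aemeasurable).mp hUV,
      hlU, hlV]
  have hUVpre : ∀ S : Set (ℝ × ℝ), MeasurableSet S →
      Pr ((fun ω => (U ω, V ω)) ⁻¹' S) = (unifOI.prod unifOI) S := by
    intro S hSm
    rw [← hmap, Measure.map_apply (hU.prodMk hV) hSm]
  rw [hBUV.measure_inter_preimage_eq_mul _ _ (measurableSet_singleton true) hSm2,
    hBUV.measure_inter_preimage_eq_mul _ _ (measurableSet_singleton false) hSm1,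
    hUVpre _ hSm2, hUVpre _ hSm1]
  have hBtrue : Pr (B ⁻¹' {true}) = ENNReal.ofReal (1 - α) := hlB
  have hBfalse : Pr (B ⁻¹' {false}) = ENNReal.ofReal α := by
    have he : B ⁻¹' {false} = (B ⁻¹' {true})ᶜ := by
      ext ω; simp
    rw [he, prob_compl_eq_one_sub (hB (measurableSet_singleton true)), hBtrue,
      ← ENNReal.ofReal_one, ← ENNReal.ofReal_sub _ (by linarith : (0:ℝ) ≤ 1 - α)]
    norm_num
  have hprod1 : (unifOI.prod unifOI) {p : ℝ × ℝ | p.1 ^ α ≤ t} = ENNReal.ofReal s := by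
    have he : {p : ℝ × ℝ | p.1 ^ α ≤ t} = {x : ℝ | x ^ α ≤ t} ×ˢ Set.univ := by
      ext p; simp [Set.mem_prod]
    rw [he, Measure.prod_prod, unif_calc1 α t s hα0 hs0 hs1 hsα, measure_univ, mul_one]
  rw [hBtrue, hBfalse, hprod1, prod_calc α t s hα0 hα1 ht0 hs0 hs1 hsα,
    min_eq_left ht1.le]
  rw [← ENNReal.ofReal_mul (by linarith : (0:ℝ) ≤ 1 - α),
    ← ENNReal.ofReal_mul hα0.le,
    ← ENNReal.ofReal_add ?nn1 ?nn2]
  case nn1 =>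
    have h1 : (0:ℝ) ≤ (t - s)/(1-α) := div_nonneg (by linarith) (by linarith)
    have : (0:ℝ) ≤ s + (t - s)/(1-α) := by linarith
    exact mul_nonneg (by linarith) this
  case nn2 => exact mul_nonneg hα0.le hs0.le
  have h1α : (1:ℝ) - α ≠ 0 := by linarith
  have harith : (1 - α) * (s + (t - s)/(1-α)) + α * s = t := by
    field_simp
    ring
  rw [harith]
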